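/- Any sequence of jeu de taquin slides rectifying a skew standard tableau T of shape ν/λ can be encoded by a standard tableau A of straight shape λ, so that the rectification via that sequence equals infusion₁(A,T). -/

import Mathlib

open scoped Classical

noncomputable section

variable {Λ : Type} [Fintype Λ] [PartialOrder Λ]

/-- The set of boxes occupied by a (partial) filling. -/
def shape (T : Λ → Option ℕ) : Finset Λ :=
  Finset.univ.filter fun x => (T x).isSome

/-- Lower order ideal (straight shape). -/
def IsLowerIdeal (S : Finset Λ) : Prop := ∀ x ∈ S, ∀ y, y ≤ x → y ∈ S

/-- `T` is a standard filling of a skew shape: its domain is a difference of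
nested lower order ideals, its labels are exactly `1,…,m` each used once, and
labels strictly increase along the order of `Λ`. -/
def IsStandard (T : Λ → Option ℕ) : Prop :=
  (∃ lam : Finset Λ, IsLowerIdeal lam ∧ Disjoint lam (shape T) ∧
    IsLowerIdeal (lam ∪ shape T)) ∧
  (∀ i : ℕ, 1 ≤ i → i ≤ (shape T).card → ∃! x : Λ, T x = some i) ∧
  (∀ x ∈ shape T, ∃ i : ℕ, T x = some i ∧ 1 ≤ i ∧ i ≤ (shape T).card) ∧
  (∀ x y : Λ, x ∈ shape T → y ∈ shape T → x < y →
    ∀ i j : ℕ, T x = some i → T y = some j → i < j)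

def lab (T : Λ → Option ℕ) (x : Λ) : ℕ := (T x).getD 0

def pickMinBy (f : Λ → ℕ) (s : Finset Λ) (h : s.Nonempty) : Λ :=
  (Finset.exists_min_image s f h).choose

def pickMaxBy (f : Λ → ℕ) (s : Finset Λ) (h : s.Nonempty) : Λ :=
  (Finset.exists_max_image s f h).choose

/-- One full jeu de taquin slide into the vacant box `x`: repeatedly move into the
vacancy the smallest label among the boxes covering it. -/
def slideAux : ℕ → (Λ → Option ℕ) → Λ → (Λ → Option ℕ)
  | 0, T, _ => T
  | n+1, T, x =>
    let cands := (shape T).filter fun y => x ⋖ y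
    if h : cands.Nonempty then
      let y := pickMinBy (lab T) cands h
      slideAux n (fun z => if z = x then T y else if z = y then none else T z) y
    else T

/-- One full reverse jeu de taquin slide into the vacant box `x`: repeatedly move
into the vacancy the largest label among the boxes it covers. -/
def revSlideAux : ℕ → (Λ → Option ℕ) → Λ → (Λ → Option ℕ)
  | 0, T, _ => T
  | n+1, T, x =>
    let cands := (shape T).filter fun y => y ⋖ x
    if h : cands.Nonempty then
      let y := pickMaxBy (lab T) cands h
      revSlideAux n (fun z => if z = x then T y else if z = y then none else T z) y
    else T

/-- `x` is an admissible box for an (inner) jeu de taquin slide on `T`: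
vacant, below some box of `T`, and maximal such. -/
def InnerAdmissible (T : Λ → Option ℕ) (x : Λ) : Prop :=
  T x = none ∧ (∃ y ∈ shape T, x < y) ∧
  ∀ z : Λ, T z = none → (∃ y ∈ shape T, z < y) → ¬ x < z

/-- `x` is an admissible box for a reverse jeu de taquin slide on `T`:
vacant, above some box of `T`, and minimal such. -/
def OuterAdmissible (T : Λ → Option ℕ) (x : Λ) : Prop :=
  T x = none ∧ (∃ y ∈ shape T, y < x) ∧
  ∀ z : Λ, T z = none → (∃ y ∈ shape T, y < z) → ¬ z < x

def jdt (x : Λ) (T : Λ → Option ℕ) : Λ → Option ℕ :=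
  if InnerAdmissible T x then slideAux (Fintype.card Λ) T x else T

def revjdt (x : Λ) (T : Λ → Option ℕ) : Λ → Option ℕ :=
  if OuterAdmissible T x then revSlideAux (Fintype.card Λ) T x else T

/-- Apply a sequence of slides (`true`) and reverse slides (`false`) at the
given boxes. -/
def applySeq (s : List (Bool × Λ)) (T : Λ → Option ℕ) : Λ → Option ℕ :=
  s.foldl (fun T p => if p.1 then jdt p.2 T else revjdt p.2 T) T

/-- Dual equivalence: same shape, and every common sequence of slides and
reverse slides produces tableaux of the same shape. -/
def DualEquiv (T U : Λ → Option ℕ) : Prop :=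
  shape T = shape U ∧
  ∀ s : List (Bool × Λ), shape (applySeq s T) = shape (applySeq s U)

/-- `mu` extends `lam`: `lam ∪ mu` is a straight shape containing `lam` and `mu`
as complementary down-closed and up-closed subsets. -/
def ShapeExtends (mu lam : Finset Λ) : Prop :=
  Disjoint lam mu ∧ IsLowerIdeal (lam ∪ mu) ∧
  (∀ x ∈ lam, ∀ y ∈ lam ∪ mu, y ≤ x → y ∈ lam) ∧
  (∀ x ∈ mu, ∀ y ∈ lam ∪ mu, x ≤ y → y ∈ mu)

/-- `A ⨿ B`: keep the labels of `A` and shift the labels of `B` up by `|shape A|`. -/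
def tabConcat (A B : Λ → Option ℕ) : Λ → Option ℕ := fun x =>
  match A x with
  | some i => some i
  | none => (B x).map (· + (shape A).card)

/-- One step of infusion on a triple `(T, U, V)`: remove the largest label of `T`
at its box `x`, slide `U` into `x`, and record the removed label at the vacated
hole in `V`. -/
def infusionStep :
    ((Λ → Option ℕ) × (Λ → Option ℕ) × (Λ → Option ℕ)) →
    ((Λ → Option ℕ) × (Λ → Option ℕ) × (Λ → Option ℕ)) := fun p =>
  let T := p.1; let U := p.2.1; let V := p.2.2
  if h : (shape T).Nonempty then
    let x := pickMaxBy (lab T) (shape T) h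
    let T' := fun z => if z = x then none else T z
    let U' := slideAux (Fintype.card Λ) U x
    let hole := if h2 : (shape U \ shape U').Nonempty then h2.choose else x
    let V' := fun z => if z = hole then T x else V z
    (T', U', V')
  else p

/-- `infusion (T,U)` for `U` extending `T`: slide `U` through the boxes of `T` in
decreasing label order; first output is the slid `U`, second records `T`'s labels
in the vacated holes. -/
def infusion (T U : Λ → Option ℕ) : (Λ → Option ℕ) × (Λ → Option ℕ) :=
  let r := infusionStep^[Fintype.card Λ] (T, U, fun _ => none)
  (r.2.1, r.2.2)

/-- One step of reverse infusion: remove the smallest label of `U` at its box `x`,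
reverse-slide `T` into `x`, and record the removed label at the vacated hole. -/
def revinfusionStep :
    ((Λ → Option ℕ) × (Λ → Option ℕ) × (Λ → Option ℕ)) →
    ((Λ → Option ℕ) × (Λ → Option ℕ) × (Λ → Option ℕ)) := fun p =>
  let T := p.1; let U := p.2.1; let V := p.2.2
  if h : (shape U).Nonempty then
    let x := pickMinBy (lab U) (shape U) h
    let U' := fun z => if z = x then none else U z
    let T' := revSlideAux (Fintype.card Λ) T x
    let hole := if h2 : (shape T \ shape T').Nonempty then h2.choose else x
    let V' := fun z => if z = hole then U x else V z
    (T', U', V')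
  else p

/-- `revinfusion (T,U)`: reverse-slide `T` through the boxes of `U` in increasing
label order; first output records `U`'s labels in the vacated holes (a straight
tableau), second is the migrated `T`. -/
def revinfusion (T U : Λ → Option ℕ) : (Λ → Option ℕ) × (Λ → Option ℕ) :=
  let r := revinfusionStep^[Fintype.card Λ] (T, U, fun _ => none)
  (r.2.2, r.1)

def applyJdtSeq (l : List Λ) (T : Λ → Option ℕ) : Λ → Option ℕ :=
  l.foldl (fun T x => jdt x T) T

/-- `V` is a rectification of `T`: obtained from `T` by jeu de taquin slides and of
straight shape. -/
def IsRectificationOf (V T : Λ → Option ℕ) : Prop :=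
  (∃ l : List Λ, applyJdtSeq l T = V) ∧ IsLowerIdeal (shape V)

/-- The rectification of `T` (any choice of rectifying slide sequence). -/
def rect (T : Λ → Option ℕ) : Λ → Option ℕ :=
  if h : ∃ l : List Λ, IsLowerIdeal (shape (applyJdtSeq l T)) then
    applyJdtSeq h.choose T else T

/-- Sch\"utzenberger's `Δ`: delete the entry `1` at the minimum `b`, decrease all
labels by one, and slide into `b`. -/
def delta (b : Λ) (T : Λ → Option ℕ) : Λ → Option ℕ :=
  slideAux (Fintype.card Λ) (fun x => if x = b then none else (T x).map (· - 1)) b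

/-- Evacuation: the label of `x` is `|λ|+1-i` where `x ∈ shape (Δ^[i-1] T) \ shape (Δ^[i] T)`. -/
def evac (b : Λ) (T : Λ → Option ℕ) : Λ → Option ℕ := fun x =>
  if x ∈ shape T then
    some ((shape T).card + 1 -
      ((Finset.range (shape T).card).filter fun j => x ∈ shape ((delta b)^[j] T)).card)
  else none

/-- The shapes lying one box above `γ` and inside `β`. -/
def Between (γ β : Finset Λ) : Set (Finset Λ) :=
  {ε | IsLowerIdeal ε ∧ γ ⊆ ε ∧ ε ⊆ β ∧ ε.card = γ.card + 1}

/-- The local growth rule for a 2×2 square with corners `α` (top-left), `β`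
(top-right), `γ` (bottom-left), `δ` (bottom-right). -/
def LocalRule (α β γ δ : Finset Λ) : Prop :=
  δ ∈ Between γ β ∧ (δ = α ↔ Between γ β = {α})

/-- A `(p+1) × (q+1)` growth diagram (rows indexed from the top). -/
def IsGrowthDiagram (p q : ℕ) (g : ℕ → ℕ → Finset Λ) : Prop :=
  (∀ i j, i ≤ p → j ≤ q → IsLowerIdeal (g i j)) ∧
  (∀ i j, i ≤ p → j < q → g i j ⊆ g i (j+1) ∧ (g i (j+1)).card = (g i j).card + 1) ∧
  (∀ i j, i < p → j ≤ q → g (i+1) j ⊆ g i j ∧ (g i j).card = (g (i+1) j).card + 1) ∧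
  (∀ i j, i < p → j < q → LocalRule (g i j) (g i (j+1)) (g (i+1) j) (g (i+1) (j+1)))

/-- The tableau of shape `{x₁,…,x_p}` encoding a slide sequence: `x_i` gets label `p+1-i`. -/
def encodeTab (l : List Λ) : Λ → Option ℕ := fun x =>
  if x ∈ l then some (l.length - l.findIdx (fun y => decide (y = x))) else none

end
section AuxProof
set_option linter.unusedSectionVars false

variable {Λ : Type} [Fintype Λ] [PartialOrder Λ]

lemma mem_shape {T : Λ → Option ℕ} {x : Λ} : x ∈ shape T ↔ (T x).isSome := by
  simp [shape]

lemma mem_shape' {T : Λ → Option ℕ} {x : Λ} : x ∈ shape T ↔ T x ≠ none := by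
  simp [mem_shape, Option.isSome_iff_ne_none]

lemma not_mem_shape {T : Λ → Option ℕ} {x : Λ} : x ∉ shape T ↔ T x = none := by
  simp [mem_shape']

/-- number of elements strictly above `p` -/
private noncomputable def upcard (p : Λ) : ℕ := (Finset.univ.filter fun z => p < z).card

private lemma upcard_lt {p y : Λ} (h : p < y) : upcard y < upcard p := by
  apply Finset.card_lt_card
  constructor
  · intro z hz
    simp only [Finset.mem_filter, Finset.mem_univ, true_and] at hz ⊢
    exact h.trans hz
  · intro hsub
    have := hsub (by simp [h] : y ∈ Finset.univ.filter fun z => p < z)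
    simp at this

private lemma upcard_lt_card (p : Λ) : upcard p < Fintype.card Λ := by
  have : (Finset.univ.filter fun z => p < z) ⊂ Finset.univ := by
    refine Finset.ssubset_iff_of_subset (Finset.filter_subset _ _) |>.mpr ?_
    exact ⟨p, Finset.mem_univ p, by simp⟩
  simpa [upcard, Finset.card_univ] using Finset.card_lt_card this

private lemma exists_covby_le {a b : Λ} (h : a < b) : ∃ z, a ⋖ z ∧ z ≤ b := by
  obtain ⟨m, hm, hmin⟩ :=
    (Finset.univ.filter fun z => a < z ∧ z ≤ b).exists_minimal ⟨b, by simp [h]⟩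
  simp only [Finset.mem_filter, Finset.mem_univ, true_and] at hm hmin
  refine ⟨m, ⟨hm.1, fun c hac hcm => ?_⟩, hm.2⟩
  exact lt_irrefl _ (hcm.trans_le (hmin ⟨hac, hcm.le.trans hm.2⟩ hcm.le))

lemma pickMinBy_mem {f : Λ → ℕ} {s : Finset Λ} (h : s.Nonempty) : pickMinBy f s h ∈ s :=
  (Finset.exists_min_image s f h).choose_spec.1

lemma pickMaxBy_mem {f : Λ → ℕ} {s : Finset Λ} (h : s.Nonempty) : pickMaxBy f s h ∈ s :=
  (Finset.exists_max_image s f h).choose_spec.1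

lemma pickMaxBy_le {f : Λ → ℕ} {s : Finset Λ} (h : s.Nonempty) :
    ∀ b ∈ s, f b ≤ f (pickMaxBy f s h) :=
  (Finset.exists_max_image s f h).choose_spec.2

private lemma slideAux_succ_pos {n : ℕ} {U : Λ → Option ℕ} {p : Λ}
    (hc : ((shape U).filter fun y => p ⋖ y).Nonempty) :
    slideAux (n+1) U p =
      slideAux n
        (fun z => if z = p then U (pickMinBy (lab U) ((shape U).filter fun y => p ⋖ y) hc)
          else if z = pickMinBy (lab U) ((shape U).filter fun y => p ⋖ y) hc then none else U z)
        (pickMinBy (lab U) ((shape U).filter fun y => p ⋖ y) hc) := by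
  rw [slideAux]
  simp only [dif_pos hc]

private lemma slideAux_succ_neg {n : ℕ} {U : Λ → Option ℕ} {p : Λ}
    (hc : ¬ ((shape U).filter fun y => p ⋖ y).Nonempty) :
    slideAux (n+1) U p = U := by
  rw [slideAux]
  simp only [dif_neg hc]

private lemma slide_core : ∀ (n : ℕ) (U : Λ → Option ℕ) (p : Λ), U p = none → upcard p < n →
    (slideAux n U p = U ∧ ¬ ((shape U).filter fun y => p ⋖ y).Nonempty) ∨
    ∃ h, p < h ∧ h ∈ shape U ∧ shape (slideAux n U p) = insert p (shape U \ {h}) ∧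
      ∀ y ∈ shape (slideAux n U p), ¬ h ⋖ y
  | 0, U, p, _, hn => absurd hn (by omega)
  | n+1, U, p, hp, hn => by
    by_cases hc : ((shape U).filter fun y => p ⋖ y).Nonempty
    · right
      set y := pickMinBy (lab U) ((shape U).filter fun y => p ⋖ y) hc with hydef
      have hys : y ∈ (shape U).filter fun y => p ⋖ y := pickMinBy_mem hc
      have hyU : y ∈ shape U := (Finset.mem_filter.mp hys).1
      have hpy : p ⋖ y := (Finset.mem_filter.mp hys).2
      set U1 : Λ → Option ℕ :=
        fun z => if z = p then U y else if z = y then none else U z with hU1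
      have hrw : slideAux (n+1) U p = slideAux n U1 y := slideAux_succ_pos hc
      have hU1y : U1 y = none := by
        simp [hU1, if_neg hpy.lt.ne']
      have hsh1 : shape U1 = insert p (shape U \ {y}) := by
        ext z
        simp only [mem_shape, hU1, Finset.mem_insert, Finset.mem_sdiff, Finset.mem_singleton]
        by_cases hzp : z = p
        · subst hzp
          simp [mem_shape.mp hyU]
        · by_cases hzy : z = y
          · subst hzy
            simp [hzp]
          · simp [hzp, hzy, mem_shape]
      have hun : upcard y < n := by
        have := upcard_lt hpy.lt
        omega
      rcases slide_core n U1 y hU1y hun with ⟨heq, hnc⟩ | ⟨h, hyh, hhU1, hsh', hcov⟩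
      · refine ⟨y, hpy.lt, hyU, ?_, ?_⟩
        · rw [hrw, heq, hsh1]
        · intro z hz hyz
          rw [hrw, heq] at hz
          exact hnc ⟨z, Finset.mem_filter.mpr ⟨hz, hyz⟩⟩
      · have hhy : h ≠ y := fun he => by simp [he, mem_shape', hU1y] at hhU1
        have hhp : h ≠ p := fun he => absurd (hpy.lt.trans hyh) (by simp [he])
        have hhU : h ∈ shape U := by
          rw [hsh1] at hhU1
          rcases Finset.mem_insert.mp hhU1 with he | hm
          · exact absurd he hhp
          · exact (Finset.mem_sdiff.mp hm).1
        refine ⟨h, hpy.lt.trans hyh, hhU, ?_, ?_⟩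
        · rw [hrw, hsh', hsh1]
          ext z
          simp only [Finset.mem_insert, Finset.mem_sdiff, Finset.mem_singleton]
          constructor
          · rintro (rfl | ⟨(rfl | ⟨hzU, hzy⟩), hzh⟩)
            · exact Or.inr ⟨hyU, hhy.symm⟩
            · exact Or.inl rfl
            · exact Or.inr ⟨hzU, hzh⟩
          · rintro (rfl | ⟨hzU, hzh⟩)
            · exact Or.inr ⟨Or.inl rfl, hhp.symm⟩
            · by_cases hzy : z = y
              · exact Or.inl hzy
              · exact Or.inr ⟨Or.inr ⟨hzU, hzy⟩, hzh⟩
        · rw [hrw]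
          exact hcov
    · left
      exact ⟨slideAux_succ_neg hc, hc⟩

/-- The key structural lemma about one admissible jdt slide. -/
lemma slide_step {U : Λ → Option ℕ} {x : Λ} (hx : InnerAdmissible U x) :
    ∃ h, h ∈ shape U ∧ x < h ∧
      shape (slideAux (Fintype.card Λ) U x) = insert x (shape U \ {h}) ∧
      ∀ y ∈ shape (slideAux (Fintype.card Λ) U x), ¬ h < y := by
  obtain ⟨hnone, ⟨y0, hy0, hxy0⟩, hmax⟩ := hx
  rcases slide_core (Fintype.card Λ) U x hnone (upcard_lt_card x) with
    ⟨_, hnc⟩ | ⟨h, h1, h2, h3, h4⟩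
  · exfalso
    obtain ⟨z, hz, hzy0⟩ := exists_covby_le hxy0
    have hzU : z ∈ shape U := by
      rcases eq_or_lt_of_le hzy0 with rfl | hlt
      · exact hy0
      · by_contra hzn
        exact hmax z (not_mem_shape.mp hzn) ⟨y0, hy0, hlt⟩ hz.lt
    exact hnc ⟨z, Finset.mem_filter.mpr ⟨hzU, hz⟩⟩
  · refine ⟨h, h2, h1, h3, ?_⟩
    intro y hy hlt
    obtain ⟨z, hz, hzy⟩ := exists_covby_le hlt
    by_cases hzS : z ∈ shape U
    · refine h4 z ?_ hz
      rw [h3]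
      exact Finset.mem_insert_of_mem (Finset.mem_sdiff.mpr ⟨hzS, by
        simp only [Finset.mem_singleton]
        exact fun he => absurd hz.lt (by simp [he])⟩)
    · have hyS : y ∈ shape U := by
        rw [h3] at hy
        rcases Finset.mem_insert.mp hy with rfl | hm
        · exact absurd (h1.trans (hz.lt.trans_le hzy)) (lt_irrefl _)
        · exact (Finset.mem_sdiff.mp hm).1
      have hzy' : z < y := lt_of_le_of_ne hzy (fun he => hzS (he ▸ hyS))
      exact hmax z (not_mem_shape.mp hzS) ⟨y, hyS, hzy'⟩ (h1.trans hz.lt)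

end AuxProof
section AuxProof2
set_option linter.unusedSectionVars false

variable {Λ : Type} [Fintype Λ] [PartialOrder Λ]

private lemma applyJdtSeq_nil (T : Λ → Option ℕ) : applyJdtSeq [] T = T := rfl

private lemma applyJdtSeq_take_succ (T : Λ → Option ℕ) (l : List Λ) {k : ℕ}
    (hk : k < l.length) :
    applyJdtSeq (l.take (k+1)) T = jdt (l.get ⟨k, hk⟩) (applyJdtSeq (l.take k) T) := by
  conv_lhs => rw [← List.take_concat_get hk]
  rw [List.concat_eq_append]
  rw [applyJdtSeq, applyJdtSeq, List.foldl_append]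
  rfl

/-- step data along the sequence -/
private lemma step_data (T : Λ → Option ℕ) (l : List Λ)
    (hadm : ∀ i : Fin l.length, InnerAdmissible (applyJdtSeq (l.take i.val) T) (l.get i))
    (k : ℕ) (hk : k < l.length) :
    ∃ h, h ∈ shape (applyJdtSeq (l.take k) T) ∧ l.get ⟨k, hk⟩ < h ∧
      shape (applyJdtSeq (l.take (k+1)) T)
        = insert (l.get ⟨k, hk⟩) (shape (applyJdtSeq (l.take k) T) \ {h}) ∧
      ∀ y ∈ shape (applyJdtSeq (l.take (k+1)) T), ¬ h < y := by
  have ha := hadm ⟨k, hk⟩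
  have hstep : applyJdtSeq (l.take (k+1)) T
      = slideAux (Fintype.card Λ) (applyJdtSeq (l.take k) T) (l.get ⟨k, hk⟩) := by
    rw [applyJdtSeq_take_succ T l hk, jdt, if_pos ha]
  rw [hstep]
  exact slide_step ha

private lemma below_back (T : Λ → Option ℕ) (l : List Λ)
    (hadm : ∀ i : Fin l.length, InnerAdmissible (applyJdtSeq (l.take i.val) T) (l.get i))
    {i j : ℕ} (hij : i ≤ j) (hj : j ≤ l.length) {z : Λ}
    (hz : ∃ y ∈ shape (applyJdtSeq (l.take j) T), z < y) :
    ∃ y ∈ shape (applyJdtSeq (l.take i) T), z < y := by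
  induction j with
  | zero =>
    have : i = 0 := by omega
    exact this ▸ hz
  | succ j ih =>
    rcases Nat.lt_or_ge i (j+1) with hlt | hge
    · have hjl : j < l.length := by omega
      obtain ⟨h, hhS, hxh, hsh, _⟩ := step_data T l hadm j hjl
      apply ih (by omega) (by omega)
      obtain ⟨y, hy, hzy⟩ := hz
      rw [hsh] at hy
      rcases Finset.mem_insert.mp hy with rfl | hm
      · exact ⟨h, hhS, hzy.trans hxh⟩
      · exact ⟨y, (Finset.mem_sdiff.mp hm).1, hzy⟩
    · have : i = j + 1 := by omega
      exact this ▸ hz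

private lemma inv_lemma (T : Λ → Option ℕ) (lam : Finset Λ)
    (hdisj : Disjoint lam (shape T)) (hnu : IsLowerIdeal (lam ∪ shape T))
    (l : List Λ)
    (hadm : ∀ i : Fin l.length, InnerAdmissible (applyJdtSeq (l.take i.val) T) (l.get i)) :
    ∀ k, k ≤ l.length →
      ((l.take k).toFinset ⊆ lam) ∧
      Disjoint (lam \ (l.take k).toFinset) (shape (applyJdtSeq (l.take k) T)) ∧
      (∀ z y, y ∈ shape (applyJdtSeq (l.take k) T) → z ≤ y →
        z ∈ (lam \ (l.take k).toFinset) ∪ shape (applyJdtSeq (l.take k) T)) := by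
  intro k
  induction k with
  | zero =>
    intro _
    simp only [List.take_zero, List.toFinset_nil, applyJdtSeq_nil, Finset.sdiff_empty]
    refine ⟨Finset.empty_subset _, hdisj, ?_⟩
    intro z y hy hzy
    exact hnu y (Finset.mem_union_right _ hy) z hzy
  | succ k ih =>
    intro hk1
    have hk : k < l.length := by omega
    obtain ⟨ih1, ih2, ih3⟩ := ih (by omega)
    set x := l.get ⟨k, hk⟩ with hxdef
    have ha := hadm ⟨k, hk⟩
    obtain ⟨hxnone, ⟨y0, hy0, hxy0⟩, _⟩ := ha
    obtain ⟨h, hhS, hxh, hsh, hcov⟩ := step_data T l hadm k hk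
    have hxS : x ∉ shape (applyJdtSeq (l.take k) T) := not_mem_shape.mpr hxnone
    have hxlam : x ∈ lam \ (l.take k).toFinset := by
      rcases Finset.mem_union.mp (ih3 x y0 hy0 hxy0.le) with hm | hm
      · exact hm
      · exact absurd hm hxS
    have htake : (l.take (k+1)).toFinset = insert x (l.take k).toFinset := by
      conv_lhs => rw [← List.take_concat_get hk]
      ext z
      simp only [List.concat_eq_append, List.toFinset_append, Finset.mem_union, List.toFinset_cons,
        List.toFinset_nil, LawfulSingleton.insert_empty_eq, Finset.mem_singleton, Finset.mem_insert, hxdef,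
        List.get_eq_getElem]
      tauto
    refine ⟨?_, ?_, ?_⟩
    · rw [htake]
      exact Finset.insert_subset (Finset.mem_sdiff.mp hxlam).1 ih1
    · rw [htake, hsh]
      rw [Finset.disjoint_left]
      intro z hz hz2
      have hz' := Finset.mem_sdiff.mp hz
      have hzx : z ≠ x := fun he => hz'.2 (by rw [he]; exact Finset.mem_insert_self x _)
      rcases Finset.mem_insert.mp hz2 with he | hm
      · exact hzx he
      · have : z ∈ lam \ (l.take k).toFinset := Finset.mem_sdiff.mpr
          ⟨hz'.1, fun hm2 => hz'.2 (Finset.mem_insert_of_mem hm2)⟩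
        exact Finset.disjoint_left.mp ih2 this (Finset.mem_sdiff.mp hm).1
    · intro z y hy hzy
      rw [hsh] at hy ⊢
      have classify : z ∈ lam \ (l.take k).toFinset ∪ shape (applyJdtSeq (l.take k) T) →
          z ∈ lam \ (l.take (k+1)).toFinset ∪ insert x (shape (applyJdtSeq (l.take k) T) \ {h}) := by
        intro hmem
        by_cases hzx : z = x
        · exact Finset.mem_union_right _ (by rw [hzx]; exact Finset.mem_insert_self x _)
        rcases Finset.mem_union.mp hmem with hm | hm
        · refine Finset.mem_union_left _ (Finset.mem_sdiff.mpr
            ⟨(Finset.mem_sdiff.mp hm).1, ?_⟩)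
          rw [htake]
          intro hins
          rcases Finset.mem_insert.mp hins with he | hm2
          · exact hzx he
          · exact (Finset.mem_sdiff.mp hm).2 hm2
        · have hzh : z ≠ h := by
            rintro rfl
            rcases Finset.mem_insert.mp hy with heq | hym
            · exact absurd ((heq ▸ hzy).trans_lt hxh) (lt_irrefl _)
            · rcases eq_or_lt_of_le hzy with rfl | hlt
              · exact (Finset.mem_sdiff.mp hym).2 (Finset.mem_singleton_self _)
              · exact hcov y (by rw [hsh]; exact Finset.mem_insert_of_mem hym) hlt
          exact Finset.mem_union_right _
            (Finset.mem_insert_of_mem (Finset.mem_sdiff.mpr ⟨hm, by simp [hzh]⟩))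
      rcases Finset.mem_insert.mp hy with heq | hym
      · exact classify (ih3 z y0 hy0 ((heq ▸ hzy).trans hxy0.le))
      · exact classify (ih3 z y (Finset.mem_sdiff.mp hym).1 hzy)

end AuxProof2
section AuxProof3
set_option linter.unusedSectionVars false

variable {Λ : Type} [Fintype Λ] [PartialOrder Λ]

private lemma toFinset_eq_lam (T : Λ → Option ℕ) (lam : Finset Λ)
    (hdisj : Disjoint lam (shape T)) (hnu : IsLowerIdeal (lam ∪ shape T))
    (l : List Λ) (hnd : l.Nodup) (hlen : l.length = lam.card)
    (hadm : ∀ i : Fin l.length, InnerAdmissible (applyJdtSeq (l.take i.val) T) (l.get i)) :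
    l.toFinset = lam := by
  have hsub : l.toFinset ⊆ lam := by
    have := (inv_lemma T lam hdisj hnu l hadm l.length le_rfl).1
    rwa [List.take_length] at this
  refine Finset.eq_of_subset_of_card_le hsub ?_
  rw [List.toFinset_card_of_nodup hnd, hlen]

/-- no later box of the sequence is strictly above an earlier one -/
private lemma no_incr (T : Λ → Option ℕ) (lam : Finset Λ)
    (hdisj : Disjoint lam (shape T)) (hnu : IsLowerIdeal (lam ∪ shape T))
    (l : List Λ) (hnd : l.Nodup) (hlen : l.length = lam.card)
    (hadm : ∀ i : Fin l.length, InnerAdmissible (applyJdtSeq (l.take i.val) T) (l.get i))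
    {i j : ℕ} (hij : i < j) (hj : j < l.length) :
    ¬ l.get ⟨i, hij.trans hj⟩ < l.get ⟨j, hj⟩ := by
  intro hlt
  set xi := l.get ⟨i, hij.trans hj⟩
  set xj := l.get ⟨j, hj⟩ with hxjdef
  -- xj is in lam
  have hxjlam : xj ∈ lam := by
    rw [← toFinset_eq_lam T lam hdisj hnu l hnd hlen hadm]
    exact List.mem_toFinset.mpr (List.get_mem l _)
  -- xj is not among the first i entries
  have hxjtake : xj ∉ (l.take i).toFinset := by
    intro hmem
    rw [List.mem_toFinset] at hmem
    have hnd2 := hnd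
    rw [← List.take_append_drop i l, List.nodup_append] at hnd2
    have hdropmem : xj ∈ l.drop i := by
      have hgd : (l.drop i).get ⟨j - i, by rw [List.length_drop]; omega⟩ = xj := by
        simp only [List.get_eq_getElem, List.getElem_drop, hxjdef]
        congr 1
        omega
      rw [← hgd]
      exact List.get_mem _ _
    exact hnd2.2.2 xj hmem xj hdropmem rfl
  have hxjS : xj ∉ shape (applyJdtSeq (l.take i) T) := by
    have hd := (inv_lemma T lam hdisj hnu l hadm i (by omega)).2.1
    exact fun hin => Finset.disjoint_left.mp hd (Finset.mem_sdiff.mpr ⟨hxjlam, hxjtake⟩) hin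
  have hbelow : ∃ y ∈ shape (applyJdtSeq (l.take i) T), xj < y := by
    apply below_back T l hadm (le_of_lt hij) (le_of_lt hj)
    exact (hadm ⟨j, hj⟩).2.1
  exact (hadm ⟨i, hij.trans hj⟩).2.2 xj (not_mem_shape.mp hxjS) hbelow hlt

private lemma encode_get (l : List Λ) (hnd : l.Nodup) (m : ℕ) (hm : m < l.length) :
    encodeTab l (l.get ⟨m, hm⟩) = some (l.length - m) := by
  rw [encodeTab]
  rw [if_pos (List.get_mem l _)]
  congr 1
  have : l.findIdx (fun y => decide (y = l.get ⟨m, hm⟩)) = m := by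
    rw [List.findIdx_eq hm]
    constructor
    · simp
    · intro j hji
      have : l[j] ≠ l[m] := by
        intro he
        have := (List.Nodup.getElem_inj_iff hnd).mp he
        omega
      simp [List.get_eq_getElem, this]
  rw [this]

private lemma encode_none (l : List Λ) {x : Λ} (hx : x ∉ l) : encodeTab l x = none := by
  rw [encodeTab, if_neg hx]

private lemma encode_shape (l : List Λ) : shape (encodeTab l) = l.toFinset := by
  ext x
  by_cases hx : x ∈ l
  · simp [mem_shape, encodeTab, hx]
  · simp [mem_shape, encodeTab, hx]

end AuxProof3
section AuxProof4
set_option linter.unusedSectionVars false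

variable {Λ : Type} [Fintype Λ] [PartialOrder Λ]

private noncomputable def restTab (l : List Λ) (k : ℕ) : Λ → Option ℕ :=
  fun x => if x ∈ l.drop k then encodeTab l x else none

private lemma restTab_zero (l : List Λ) : restTab l 0 = encodeTab l := by
  funext x
  rw [restTab, List.drop_zero]
  by_cases hx : x ∈ l
  · rw [if_pos hx]
  · rw [if_neg hx, encode_none l hx]

private lemma restTab_len (l : List Λ) : restTab l l.length = fun _ => none := by
  funext x
  rw [restTab, List.drop_length]
  simp

private lemma drop_cons (l : List Λ) {k : ℕ} (hk : k < l.length) :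
    l.drop k = l.get ⟨k, hk⟩ :: l.drop (k+1) := by
  rw [List.get_eq_getElem]
  exact (List.drop_eq_getElem_cons hk)

private lemma restTab_succ (l : List Λ) (hnd : l.Nodup) {k : ℕ} (hk : k < l.length) :
    (fun z => if z = l.get ⟨k, hk⟩ then none else restTab l k z) = restTab l (k+1) := by
  have hdnd : (l.drop k).Nodup := hnd.sublist (List.drop_sublist k l)
  have hnotmem : l.get ⟨k, hk⟩ ∉ l.drop (k+1) := by
    have := hdnd
    rw [drop_cons l hk, List.nodup_cons] at this
    exact this.1
  funext z
  by_cases hz : z = l.get ⟨k, hk⟩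
  · rw [if_pos hz, restTab, if_neg (by rw [hz]; exact hnotmem)]
  · rw [if_neg hz, restTab, restTab]
    have hz' : z ≠ l[k] := by simpa using hz
    have : z ∈ l.drop k ↔ z ∈ l.drop (k+1) := by
      rw [drop_cons l hk, List.mem_cons]
      simp [hz']
    by_cases hm : z ∈ l.drop (k+1)
    · rw [if_pos (this.mpr hm), if_pos hm]
    · rw [if_neg (fun h => hm (this.mp h)), if_neg hm]

private lemma restTab_shape (l : List Λ) (k : ℕ) :
    shape (restTab l k) = (l.drop k).toFinset := by
  ext x
  by_cases hx : x ∈ l.drop k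
  · have hxl : x ∈ l := (List.drop_sublist k l).mem hx
    simp [mem_shape, restTab, hx, encodeTab, hxl]
  · simp [mem_shape, restTab, hx]

private lemma restTab_get (l : List Λ) (hnd : l.Nodup) {k m : ℕ} (hm : m < l.length)
    (hkm : k ≤ m) : restTab l k (l.get ⟨m, hm⟩) = some (l.length - m) := by
  rw [restTab]
  have hmem : l.get ⟨m, hm⟩ ∈ l.drop k := by
    have hgd : (l.drop k).get ⟨m - k, by rw [List.length_drop]; omega⟩ = l.get ⟨m, hm⟩ := by
      simp only [List.get_eq_getElem, List.getElem_drop]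
      congr 1
      omega
    rw [← hgd]
    exact List.get_mem _ _
  rw [if_pos hmem, encode_get l hnd m hm]

private lemma pick_rest (l : List Λ) (hnd : l.Nodup) {k : ℕ} (hk : k < l.length)
    (hne : (shape (restTab l k)).Nonempty) :
    pickMaxBy (lab (restTab l k)) (shape (restTab l k)) hne = l.get ⟨k, hk⟩ := by
  set c := pickMaxBy (lab (restTab l k)) (shape (restTab l k)) hne with hcdef
  have hcmem : c ∈ shape (restTab l k) := pickMaxBy_mem hne
  rw [restTab_shape] at hcmem
  rw [List.mem_toFinset] at hcmem
  obtain ⟨n, hcn⟩ := List.mem_iff_get.mp hcmem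
  obtain ⟨nv, hnv⟩ := n
  have hn : nv < l.length - k := by rwa [List.length_drop] at hnv
  have hcl : c = l.get ⟨k + nv, by omega⟩ := by
    rw [← hcn]
    simp only [List.get_eq_getElem, List.getElem_drop]
  -- the label of c and of l.get k
  have hlabc : lab (restTab l k) c = l.length - (k + nv) := by
    rw [hcl, lab, restTab_get l hnd _ (by omega)]
    rfl
  have hgmem : l.get ⟨k, hk⟩ ∈ shape (restTab l k) := by
    rw [restTab_shape, List.mem_toFinset, drop_cons l hk]
    exact List.mem_cons_self
  have hle := pickMaxBy_le (f := lab (restTab l k)) hne (l.get ⟨k, hk⟩) hgmem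
  have hlabg : lab (restTab l k) (l.get ⟨k, hk⟩) = l.length - k := by
    rw [lab, restTab_get l hnd hk le_rfl]
    rfl
  rw [hlabg, ← hcdef, hlabc] at hle
  have hn0 : nv = 0 := by omega
  rw [hcl]
  congr 1
  apply Fin.ext
  simp [hn0]

private lemma infusionStep_pos (A U V : Λ → Option ℕ) (h : (shape A).Nonempty) :
    ∃ V', infusionStep (A, U, V) =
      (fun z => if z = pickMaxBy (lab A) (shape A) h then none else A z,
       slideAux (Fintype.card Λ) U (pickMaxBy (lab A) (shape A) h), V') := by
  unfold infusionStep
  simp only [dif_pos h]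
  exact ⟨_, rfl⟩

private lemma infusionStep_neg (p : (Λ → Option ℕ) × (Λ → Option ℕ) × (Λ → Option ℕ))
    (h : ¬ (shape p.1).Nonempty) : infusionStep p = p := by
  unfold infusionStep
  simp only [dif_neg h]

private lemma iterate_infusion (T : Λ → Option ℕ) (l : List Λ) (hnd : l.Nodup)
    (hadm : ∀ i : Fin l.length, InnerAdmissible (applyJdtSeq (l.take i.val) T) (l.get i)) :
    ∀ k, k ≤ l.length →
      ∃ V, infusionStep^[k] (encodeTab l, T, fun _ => none)
        = (restTab l k, applyJdtSeq (l.take k) T, V) := by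
  intro k
  induction k with
  | zero =>
    intro _
    exact ⟨_, by rw [Function.iterate_zero_apply, restTab_zero, List.take_zero, applyJdtSeq_nil]⟩
  | succ k ih =>
    intro hk1
    have hk : k < l.length := by omega
    obtain ⟨V, hV⟩ := ih (by omega)
    have hne : (shape (restTab l k)).Nonempty := by
      refine ⟨l.get ⟨k, hk⟩, ?_⟩
      rw [restTab_shape, List.mem_toFinset, drop_cons l hk]
      exact List.mem_cons_self
    obtain ⟨V', hV'⟩ := infusionStep_pos (restTab l k) (applyJdtSeq (l.take k) T) V hne
    rw [pick_rest l hnd hk hne] at hV'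
    refine ⟨V', ?_⟩
    rw [Function.iterate_succ_apply', hV, hV', restTab_succ l hnd hk]
    have : applyJdtSeq (l.take (k+1)) T
        = slideAux (Fintype.card Λ) (applyJdtSeq (l.take k) T) (l.get ⟨k, hk⟩) := by
      rw [applyJdtSeq_take_succ T l hk, jdt, if_pos (hadm ⟨k, hk⟩)]
    rw [this]

private lemma infusion_eq (T : Λ → Option ℕ) (l : List Λ) (hnd : l.Nodup)
    (hadm : ∀ i : Fin l.length, InnerAdmissible (applyJdtSeq (l.take i.val) T) (l.get i)) :
    (infusion (encodeTab l) T).1 = applyJdtSeq l T := by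
  obtain ⟨V, hV⟩ := iterate_infusion T l hnd hadm l.length le_rfl
  have hfix : ∀ m (U V : Λ → Option ℕ),
      infusionStep^[m] ((fun _ => none : Λ → Option ℕ), U, V) = ((fun _ => none), U, V) := by
    intro m
    induction m with
    | zero => intro U V; rfl
    | succ m ihm =>
      intro U V
      rw [Function.iterate_succ_apply, infusionStep_neg _ (by simp [shape]), ihm]
  have hcard : l.length ≤ Fintype.card Λ := hnd.length_le_card
  have hsplit : Fintype.card Λ = (Fintype.card Λ - l.length) + l.length := by omega
  rw [infusion]
  simp only
  rw [hsplit, Function.iterate_add_apply, hV, restTab_len, hfix, List.take_length]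

end AuxProof4
/-- Any rectification sequence of `T` is encoded by a standard
tableau `A` of the inner straight shape, and the rectification via that
sequence equals `infusion₁(A,T)`. -/
theorem rectification_encoded_by_tableau {Λ : Type} [Fintype Λ]
    [PartialOrder Λ] (T : Λ → Option ℕ) (hT : IsStandard T)
    (lam : Finset Λ) (hlam : IsLowerIdeal lam)
    (hdisj : Disjoint lam (shape T)) (hnu : IsLowerIdeal (lam ∪ shape T))
    (l : List Λ) (hnd : l.Nodup) (hlen : l.length = lam.card)
    (hadm : ∀ i : Fin l.length,
      InnerAdmissible (applyJdtSeq (l.take i.val) T) (l.get i))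
    (hrect : IsLowerIdeal (shape (applyJdtSeq l T))) :
    IsStandard (encodeTab l) ∧ shape (encodeTab l) = lam ∧
      applyJdtSeq l T = (infusion (encodeTab l) T).1 := by
  have hshape : shape (encodeTab l) = lam := by
    rw [encode_shape, toFinset_eq_lam T lam hdisj hnu l hnd hlen hadm]
  refine ⟨?_, hshape, (infusion_eq T l hnd hadm).symm⟩
  have hcard : (shape (encodeTab l)).card = l.length := by
    rw [hshape, ← hlen]
  refine ⟨⟨∅, ?_, ?_, ?_⟩, ?_, ?_, ?_⟩
  · intro x hx
    simp at hx
  · exact Finset.disjoint_left.mpr (by simp)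
  · rw [Finset.empty_union, hshape]
    exact hlam
  · -- each label 1..m occurs exactly once
    intro i h1 hi
    rw [hcard] at hi
    have hLi : l.length - i < l.length := by omega
    refine ⟨l.get ⟨l.length - i, hLi⟩, ?_, ?_⟩
    · show encodeTab l (l.get ⟨l.length - i, hLi⟩) = some i
      rw [encode_get l hnd _ hLi]
      congr 1
      omega
    · intro y hy
      replace hy : encodeTab l y = some i := hy
      have hyl : y ∈ l := by
        by_contra hyl
        rw [encode_none l hyl] at hy
        exact nomatch hy
      obtain ⟨⟨m, hm⟩, hym⟩ := List.mem_iff_get.mp hyl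
      rw [← hym, encode_get l hnd m hm] at hy
      have hmi : l.length - m = i := Option.some.inj hy
      rw [← hym]
      congr 1
      apply Fin.ext
      simp only
      omega
  · -- labels are in range
    intro x hx
    have hxl : x ∈ l := by
      rw [encode_shape, List.mem_toFinset] at hx
      exact hx
    obtain ⟨⟨m, hm⟩, hxm⟩ := List.mem_iff_get.mp hxl
    refine ⟨l.length - m, ?_, by omega, by rw [hcard]; omega⟩
    rw [← hxm, encode_get l hnd m hm]
  · -- labels strictly increase
    intro x y hx hy hxy i j hxi hyj
    have hxl : x ∈ l := by
      rw [encode_shape, List.mem_toFinset] at hx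
      exact hx
    have hyl : y ∈ l := by
      rw [encode_shape, List.mem_toFinset] at hy
      exact hy
    obtain ⟨⟨m, hm⟩, hxm⟩ := List.mem_iff_get.mp hxl
    obtain ⟨⟨m', hm'⟩, hym⟩ := List.mem_iff_get.mp hyl
    rw [← hxm, encode_get l hnd m hm] at hxi
    rw [← hym, encode_get l hnd m' hm'] at hyj
    have hi : l.length - m = i := Option.some.inj hxi
    have hj : l.length - m' = j := Option.some.inj hyj
    have hmm : m' < m := by
      rcases lt_trichotomy m m' with hlt | heq | hgt
      · exfalso
        exact no_incr T lam hdisj hnu l hnd hlen hadm hlt hm' (by rw [hxm, hym]; exact hxy)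
      · exfalso
        have : x = y := by rw [← hxm, ← hym]; congr 1; exact Fin.ext heq
        exact absurd (this ▸ hxy) (lt_irrefl _)
      · exact hgt
    omega
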